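/- Let (X, μ, T) be a probability measure-preserving system, R ⊆ X measurable, and suppose there is a constant C ≥ 1 and an integer o ≥ 0 such that μ(T^{−(k+1)}(R) ∩ ⋂_{i=0}^{k−o} T^{−i}(Rᶜ)) ≤ C·μ(R)·μ(⋂_{i=0}^{k−o} T^{−i}(Rᶜ)) for all k ≥ o. Define q_k := μ({x : ∃ 1 ≤ l ≤ k, T^l(x) ∈ R}). Then for all k ≥ o, q_{k+1} ≤ q_k + C·μ(R)·(1 − q_{k−o}). -/

import Mathlib

open MeasureTheory Set
open scoped ENNReal

theorem entry_probability_recursion {X : Type*} [MeasurableSpace X]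
    (μ : Measure X) [IsProbabilityMeasure μ] (T : X → X)
    (hT : MeasurePreserving T μ μ) (R : Set X) (hR : MeasurableSet R)
    (C : ℝ) (hC : 1 ≤ C) (o : ℕ)
    (hqi : ∀ k : ℕ, o ≤ k →
      μ (T^[k + 1] ⁻¹' R ∩ ⋂ i ≤ k - o, T^[i] ⁻¹' Rᶜ) ≤
        ENNReal.ofReal C * μ R * μ (⋂ i ≤ k - o, T^[i] ⁻¹' Rᶜ)) :
    ∀ k : ℕ, o ≤ k →
      μ {x | ∃ l, 1 ≤ l ∧ l ≤ k + 1 ∧ T^[l] x ∈ R} ≤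
        μ {x | ∃ l, 1 ≤ l ∧ l ≤ k ∧ T^[l] x ∈ R} +
          ENNReal.ofReal C * μ R *
            (1 - μ {x | ∃ l, 1 ≤ l ∧ l ≤ k - o ∧ T^[l] x ∈ R}) := by
  intro k hk
  have hTm := hT.measurable
  set A : ℕ → Set X := fun n => {x | ∃ l, 1 ≤ l ∧ l ≤ n ∧ T^[l] x ∈ R} with hA
  have hAm : ∀ n, MeasurableSet (A n) := by
    intro n
    have : A n = ⋃ l, ⋃ _ : 1 ≤ l ∧ l ≤ n, T^[l] ⁻¹' R := by
      ext x; simp [hA]; tauto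
    rw [this]
    exact MeasurableSet.iUnion fun l => MeasurableSet.iUnion fun _ =>
      (hTm.iterate l) hR
  -- step 1 : μ (A (k+1)) ≤ μ (A k) + μ (T^[k+1] ⁻¹' R ∩ (A k)ᶜ)
  have hstep : μ (A (k + 1)) ≤ μ (A k) + μ (T^[k + 1] ⁻¹' R ∩ (A k)ᶜ) := by
    have hsub : A (k + 1) ⊆ A k ∪ (T^[k + 1] ⁻¹' R ∩ (A k)ᶜ) := by
      intro x hx
      by_cases h : x ∈ A k
      · exact Or.inl h
      · obtain ⟨l, h1, h2, h3⟩ := hx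
        rcases Nat.lt_or_ge l (k + 1) with h' | h'
        · exact absurd ⟨l, h1, Nat.lt_succ_iff.mp h', h3⟩ h
        · have hl : l = k + 1 := le_antisymm h2 h'
          exact Or.inr ⟨hl ▸ h3, h⟩
    exact (measure_mono hsub).trans (measure_union_le _ _)
  -- main bound on the second term
  have hmain : μ (T^[k + 1] ⁻¹' R ∩ (A k)ᶜ) ≤
      ENNReal.ofReal C * μ R * (1 - μ (A (k - o))) := by
    rcases Nat.lt_or_ge o k with hok | hok
    · -- k = o + j + 1
      obtain ⟨j, rfl⟩ := Nat.exists_eq_add_of_lt hok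
      have hBm : MeasurableSet (⋂ i ≤ j, T^[i] ⁻¹' Rᶜ) :=
        MeasurableSet.iInter fun i => MeasurableSet.iInter fun _ =>
          (hTm.iterate i) hR.compl
      have hsub2 : T^[o + j + 1 + 1] ⁻¹' R ∩ (A (o + j + 1))ᶜ ⊆
          T ⁻¹' (T^[o + j + 1] ⁻¹' R ∩ ⋂ i ≤ j, T^[i] ⁻¹' Rᶜ) := by
        intro x ⟨hx1, hx2⟩
        refine ⟨?_, ?_⟩
        · show T^[o + j + 1] (T x) ∈ R
          rwa [← Function.iterate_succ_apply]
        · simp only [mem_iInter]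
          intro i hi
          show T^[i] (T x) ∈ Rᶜ
          rw [← Function.iterate_succ_apply]
          intro hmem
          exact hx2 ⟨i + 1, Nat.succ_le_succ (Nat.zero_le i),
            by omega, hmem⟩
      have hcompl : T ⁻¹' (⋂ i ≤ j, T^[i] ⁻¹' Rᶜ) = (A (j + 1))ᶜ := by
        ext x
        simp only [mem_preimage, mem_iInter, mem_compl_iff, hA, mem_setOf_eq,
          mem_preimage]
        constructor
        · rintro h ⟨l, h1, h2, h3⟩
          obtain ⟨i, rfl⟩ := Nat.exists_eq_add_of_le h1
          have := h i (by omega)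
          rw [← Function.iterate_succ_apply] at this
          exact this (by simpa [Nat.add_comm] using h3)
        · intro h i hi hmem
          rw [← Function.iterate_succ_apply] at hmem
          exact h ⟨i + 1, Nat.succ_le_succ (Nat.zero_le i), by omega, hmem⟩
      have hqi' := hqi (o + j) (Nat.le_add_right o j)
      rw [Nat.add_sub_cancel_left] at hqi'
      calc μ (T^[o + j + 1 + 1] ⁻¹' R ∩ (A (o + j + 1))ᶜ)
          ≤ μ (T ⁻¹' (T^[o + j + 1] ⁻¹' R ∩ ⋂ i ≤ j, T^[i] ⁻¹' Rᶜ)) :=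
            measure_mono hsub2
        _ = μ (T^[o + j + 1] ⁻¹' R ∩ ⋂ i ≤ j, T^[i] ⁻¹' Rᶜ) :=
            hT.measure_preimage (((hTm.iterate _) hR).inter hBm).nullMeasurableSet
        _ ≤ ENNReal.ofReal C * μ R * μ (⋂ i ≤ j, T^[i] ⁻¹' Rᶜ) := hqi'
        _ = ENNReal.ofReal C * μ R * μ (T ⁻¹' (⋂ i ≤ j, T^[i] ⁻¹' Rᶜ)) := by
            rw [hT.measure_preimage hBm.nullMeasurableSet]
        _ = ENNReal.ofReal C * μ R * (1 - μ (A (j + 1))) := by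
            rw [hcompl, prob_compl_eq_one_sub (hAm (j + 1))]
        _ = ENNReal.ofReal C * μ R * (1 - μ (A (o + j + 1 - o))) := by
            rw [show o + j + 1 - o = j + 1 from by omega]
    · -- k = o, so k - o = 0 and A 0 = ∅
      have hko : k = o := le_antisymm hok hk
      have hA0 : A (k - o) = ∅ := by
        ext x
        simp only [hA, mem_setOf_eq, mem_empty_iff_false, iff_false]
        rintro ⟨l, h1, h2, _⟩
        omega
      rw [hA0, measure_empty, tsub_zero, mul_one]
      calc μ (T^[k + 1] ⁻¹' R ∩ (A k)ᶜ)
          ≤ μ (T^[k + 1] ⁻¹' R) := measure_mono inter_subset_left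
        _ = μ R := (hT.iterate (k + 1)).measure_preimage hR.nullMeasurableSet
        _ = 1 * μ R := (one_mul _).symm
        _ ≤ ENNReal.ofReal C * μ R := by
            gcongr
            exact ENNReal.one_le_ofReal.mpr hC
  exact hstep.trans (add_le_add_right hmain _)
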